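/- For every integer n ≥ 1 and every real x with x ≠ −1, p_n(x) = (x+1)^{n+1} · A_n((x−1)/(x+1)). -/

import Mathlib

open Polynomial Finset

/-- The alternating derivative polynomials for tangent: `p 0 = X`,
`p (n+1) = (X^2 - 1) * (p n)'`. -/
noncomputable def p : ℕ → Polynomial ℝ
  | 0 => X
  | n + 1 => (X ^ 2 - 1) * derivative (p n)

/-- The alternating derivative polynomials for secant: `q 0 = 1`,
`q (n+1) = 2(X^2 - 1) * (q n)' + 2X * q n`. -/
noncomputable def q : ℕ → Polynomial ℝ
  | 0 => 1
  | n + 1 => 2 * (X ^ 2 - 1) * derivative (q n) + 2 * X * q n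

/-- The type `A` Eulerian polynomials: `A 0 = 1`,
`A n = n*X*(A (n-1)) + X*(1-X)*(A (n-1))'` for `n ≥ 1`. -/
noncomputable def A : ℕ → Polynomial ℝ
  | 0 => 1
  | n + 1 => C ((n : ℝ) + 1) * X * A n + X * (1 - X) * derivative (A n)

theorem p_eq_eulerianA (n : ℕ) (hn : 1 ≤ n) (x : ℝ) (hx : x ≠ -1) :
    (p n).eval x = (x + 1) ^ (n + 1) * (A n).eval ((x - 1) / (x + 1)) := by
  induction n, hn using Nat.le_induction generalizing x with
  | base =>
    have hx1 : x + 1 ≠ 0 := fun h => hx (by linarith)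
    simp only [p, A, derivative_X, derivative_one]
    simp only [eval_mul, eval_add, eval_sub, eval_pow, eval_X, eval_one, eval_C, eval_mul,
      mul_zero, add_zero, zero_mul, mul_one]
    field_simp
    ring
  | succ n hn ih =>
    have hx1 : x + 1 ≠ 0 := fun h => hx (by linarith)
    set y : ℝ := (x - 1) / (x + 1) with hy
    -- derivative computations
    have h1 : HasDerivAt (fun t : ℝ => (t - 1) / (t + 1)) (2 / (x + 1) ^ 2) x := by
      have := (hasDerivAt_id x |>.sub_const 1).div (hasDerivAt_id x |>.add_const 1) hx1
      refine this.congr_deriv ?_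
      simp only [id]
      ring
    have h2 : HasDerivAt (fun t : ℝ => (A n).eval ((t - 1) / (t + 1)))
        ((derivative (A n)).eval y * (2 / (x + 1) ^ 2)) x :=
      by have := ((A n).hasDerivAt y).comp x h1; exact this
    have h3 : HasDerivAt (fun t : ℝ => (t + 1) ^ (n + 1))
        (((n : ℝ) + 1) * (x + 1) ^ n) x := by
      have := (hasDerivAt_id x |>.add_const 1).pow (n + 1)
      refine this.congr_deriv ?_
      simp only [id_eq, Nat.add_sub_cancel]
      push_cast
      ring
    have hg : HasDerivAt (fun t : ℝ => (t + 1) ^ (n + 1) * (A n).eval ((t - 1) / (t + 1)))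
        (((n : ℝ) + 1) * (x + 1) ^ n * (A n).eval y
          + (x + 1) ^ (n + 1) * ((derivative (A n)).eval y * (2 / (x + 1) ^ 2))) x :=
      h3.mul h2
    have heq : (fun t : ℝ => (p n).eval t)
        =ᶠ[nhds x] (fun t : ℝ => (t + 1) ^ (n + 1) * (A n).eval ((t - 1) / (t + 1))) := by
      filter_upwards [eventually_ne_nhds hx] with t ht
      exact ih t ht
    have hp : HasDerivAt (fun t : ℝ => (p n).eval t)
        (((n : ℝ) + 1) * (x + 1) ^ n * (A n).eval y
          + (x + 1) ^ (n + 1) * ((derivative (A n)).eval y * (2 / (x + 1) ^ 2))) x :=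
      hg.congr_of_eventuallyEq heq
    have hval : (derivative (p n)).eval x
        = ((n : ℝ) + 1) * (x + 1) ^ n * (A n).eval y
          + (x + 1) ^ (n + 1) * ((derivative (A n)).eval y * (2 / (x + 1) ^ 2)) :=
      ((p n).hasDerivAt x).unique hp
    show ((X ^ 2 - 1 : Polynomial ℝ) * derivative (p n)).eval x = _
    rw [eval_mul, hval]
    show _ = (x + 1) ^ (n + 1 + 1) *
      (C ((n : ℝ) + 1) * X * A n + X * (1 - X) * derivative (A n)).eval y
    simp only [eval_add, eval_mul, eval_sub, eval_pow, eval_X, eval_one, eval_C]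
    rw [hy]
    field_simp
    ring
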